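/- Let X be a complete separable metric space, μ a Borel probability measure on X, ν a Borel probability measure on X with finite second moment, and N' < 0. Let {B_j}_{j∈J} be a countable family of mutually disjoint Borel subsets of X with ν(X \ ⋃_{j∈J} B_j) = 0 and μ(B_j) > 0 for every j ∈ J. Set D := sup_{j∈J} diam B_j ∈ [0,∞] and ν̄ := Σ_{j∈J} ν(B_j)·μ_{B_j}, a Borel probability measure on X. Then there exists a coupling π of ν and ν̄ such that d_X(x,y) ≤ 2D for π-almost every (x,y) ∈ X × X (in particular W₂(ν, ν̄) ≤ 2D when D < ∞), and S_{N',μ}(ν̄) ≤ S_{N',μ}(ν). -/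

import Mathlib

/-- A bundled mm-space: a complete separable metric space with a Borel probability measure. -/
structure MMSpace where
  X : Type
  [metric : MetricSpace X]
  [cpl : CompleteSpace X]
  [sep : TopologicalSpace.SeparableSpace X]
  [mble : MeasurableSpace X]
  [borel : BorelSpace X]
  μ : MeasureTheory.Measure X
  [prob : MeasureTheory.IsProbabilityMeasure μ]

attribute [instance] MMSpace.metric MMSpace.cpl MMSpace.sep MMSpace.mble MMSpace.borel MMSpace.prob

open MeasureTheory ENNReal Filter Topology Set

noncomputable section

/-- A coupling of two measures on `X` is a measure on `X × X` whose marginals are the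
given measures. -/
def IsCoupling {X : Type*} [MeasurableSpace X] (π : Measure (X × X)) (μ ν : Measure X) : Prop :=
  π.map Prod.fst = μ ∧ π.map Prod.snd = ν

/-- A measure has finite second moment if `∫ d(x,x₀)² dμ < ∞` for some base point. -/
def HasFiniteSecondMoment {X : Type*} [PseudoMetricSpace X] [MeasurableSpace X]
    (μ : Measure X) : Prop :=
  ∃ x₀ : X, ∫⁻ x, ENNReal.ofReal (dist x x₀) ^ 2 ∂μ < ∞

/-- The square-root of the quadratic transport cost of a coupling. -/
def cost2 {X : Type*} [PseudoMetricSpace X] [MeasurableSpace X] (π : Measure (X × X)) : ℝ≥0∞ :=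
  (∫⁻ p, ENNReal.ofReal (dist p.1 p.2) ^ 2 ∂π) ^ (1 / 2 : ℝ)

/-- The 2-Wasserstein distance (valued in `[0,∞]`). -/
def W2 {X : Type*} [PseudoMetricSpace X] [MeasurableSpace X] (μ ν : Measure X) : ℝ≥0∞ :=
  ⨅ (π : Measure (X × X)) (_ : IsCoupling π μ ν), cost2 π

/-- A coupling is optimal if it attains the 2-Wasserstein distance. -/
def IsOptimalCoupling {X : Type*} [PseudoMetricSpace X] [MeasurableSpace X]
    (π : Measure (X × X)) (μ ν : Measure X) : Prop :=
  IsCoupling π μ ν ∧ cost2 π = W2 μ ν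

open Classical in
/-- The Rényi entropy `S_{N',μ}(ν) = ∫ ρ^{1-1/N'} dμ` if `ν = ρμ ≪ μ`, and `∞` otherwise. -/
def renyiEntropy {X : Type*} [MeasurableSpace X] (N' : ℝ) (μ ν : Measure X) : ℝ≥0∞ :=
  if ν ≪ μ then ∫⁻ x, (ν.rnDeriv μ x) ^ (1 - 1 / N') ∂μ else ∞

/-- Weak convergence of a sequence of measures: convergence of integrals of all bounded
continuous functions. -/
def WeakConv {X : Type*} [TopologicalSpace X] [MeasurableSpace X]
    (μs : ℕ → Measure X) (μ : Measure X) : Prop :=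
  ∀ f : BoundedContinuousFunction X ℝ,
    Tendsto (fun n => ∫ x, f x ∂(μs n)) atTop (𝓝 (∫ x, f x ∂μ))

/-- Tightness of a sequence of measures. -/
def IsTightSeq {X : Type*} [TopologicalSpace X] [MeasurableSpace X]
    (μs : ℕ → Measure X) : Prop :=
  ∀ ε : ℝ, 0 < ε → ∃ K : Set X, IsCompact K ∧ ∀ n, μs n Kᶜ < ENNReal.ofReal ε

/-- The function `s_κ`, with the convention `s_κ(0) = 1`. -/
def sKappa (κ θ : ℝ) : ℝ :=
  if θ = 0 then 1
  else if 0 < κ then Real.sin (Real.sqrt κ * θ) / (Real.sqrt κ * θ)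
  else if κ < 0 then Real.sinh (Real.sqrt (-κ) * θ) / (Real.sqrt (-κ) * θ)
  else 1

/-- `ω_κ = π/√κ` for `κ > 0` and `∞` otherwise. -/
def omegaKappa (κ : ℝ) : ℝ≥0∞ :=
  if 0 < κ then ENNReal.ofReal (Real.pi / Real.sqrt κ) else ∞

/-- The coefficient `τ_{K,N}^{(t)}(θ)`, valued in `[0,∞]`. -/
def tauCoeff (K N t θ : ℝ) : ℝ≥0∞ :=
  if ENNReal.ofReal θ < omegaKappa (K / (N - 1)) then
    ENNReal.ofReal (t * (sKappa (K / (N - 1)) (t * θ) / sKappa (K / (N - 1)) θ) ^ (1 - 1 / N))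
  else ∞

/-- The coefficient `σ_κ^{(t)}(θ)`, valued in `[0,∞]`. -/
def sigmaCoeff (κ t θ : ℝ) : ℝ≥0∞ :=
  if ENNReal.ofReal θ < omegaKappa κ then
    ENNReal.ofReal (t * sKappa κ (t * θ) / sKappa κ θ)
  else ∞

/-- The curvature-dimension condition `CD(K,N)` for `N < 0`, for a (probability) measure on a
metric space. -/
def IsCDSpace {X : Type*} [MetricSpace X] [MeasurableSpace X] (K N : ℝ) (μX : Measure X) : Prop :=
  ∀ ν₀ ν₁ : Measure X, IsProbabilityMeasure ν₀ → IsProbabilityMeasure ν₁ →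
    ν₀ ≪ μX → ν₁ ≪ μX →
    HasFiniteSecondMoment ν₀ → HasFiniteSecondMoment ν₁ →
    renyiEntropy N μX ν₀ < ∞ → renyiEntropy N μX ν₁ < ∞ →
    ∃ (νt : ℝ → Measure X) (π : Measure (X × X)),
      νt 0 = ν₀ ∧ νt 1 = ν₁ ∧
      (∀ s ∈ Icc (0:ℝ) 1, ∀ t ∈ Icc (0:ℝ) 1,
        W2 (νt s) (νt t) = ENNReal.ofReal |s - t| * W2 ν₀ ν₁) ∧
      IsOptimalCoupling π ν₀ ν₁ ∧
      (∀ t ∈ Icc (0:ℝ) 1, ∀ N' ∈ Ico N (0:ℝ),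
        renyiEntropy N' μX ν₀ < ∞ → renyiEntropy N' μX ν₁ < ∞ →
        renyiEntropy N' μX (νt t) ≤
          (∫⁻ p, tauCoeff K N' (1 - t) (dist p.1 p.2) * (ν₀.rnDeriv μX p.1) ^ (-(1 / N')) ∂π)
          + ∫⁻ p, tauCoeff K N' t (dist p.1 p.2) * (ν₁.rnDeriv μX p.2) ^ (-(1 / N')) ∂π)

/-- The reduced curvature-dimension condition `CD*(K,N)` for `N < 0`. -/
def IsCDStarSpace {X : Type*} [MetricSpace X] [MeasurableSpace X] (K N : ℝ)
    (μX : Measure X) : Prop :=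
  ∀ ν₀ ν₁ : Measure X, IsProbabilityMeasure ν₀ → IsProbabilityMeasure ν₁ →
    ν₀ ≪ μX → ν₁ ≪ μX →
    HasFiniteSecondMoment ν₀ → HasFiniteSecondMoment ν₁ →
    renyiEntropy N μX ν₀ < ∞ → renyiEntropy N μX ν₁ < ∞ →
    ∃ (νt : ℝ → Measure X) (π : Measure (X × X)),
      νt 0 = ν₀ ∧ νt 1 = ν₁ ∧
      (∀ s ∈ Icc (0:ℝ) 1, ∀ t ∈ Icc (0:ℝ) 1,
        W2 (νt s) (νt t) = ENNReal.ofReal |s - t| * W2 ν₀ ν₁) ∧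
      IsOptimalCoupling π ν₀ ν₁ ∧
      (∀ t ∈ Icc (0:ℝ) 1, ∀ N' ∈ Ico N (0:ℝ),
        renyiEntropy N' μX ν₀ < ∞ → renyiEntropy N' μX ν₁ < ∞ →
        renyiEntropy N' μX (νt t) ≤
          (∫⁻ p, sigmaCoeff (K / N') (1 - t) (dist p.1 p.2)
              * (ν₀.rnDeriv μX p.1) ^ (-(1 / N')) ∂π)
          + ∫⁻ p, sigmaCoeff (K / N') t (dist p.1 p.2)
              * (ν₁.rnDeriv μX p.2) ^ (-(1 / N')) ∂π)

/-- The conditioned (normalized restricted) measure `ν_B`. -/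
def condProb {X : Type*} [MeasurableSpace X] (ν : Measure X) (B : Set X) : Measure X :=
  (ν B)⁻¹ • ν.restrict B

/-- Inverse hyperbolic cosine, `arcosh x = log (x + √(x²-1))`. -/
def acosh (x : ℝ) : ℝ := Real.log (x + Real.sqrt (x ^ 2 - 1))

/-- A parameter of an mm-space: a Borel map `[0,1) → X` pushing the Lebesgue measure to `μ`. -/
def IsParameter (A : MMSpace) (φ : ℝ → A.X) : Prop :=
  Measurable φ ∧ Measure.map φ (volume.restrict (Ico (0:ℝ) 1)) = A.μ

/-- The Ky Fan distance between two measurable functions on `[0,1)`. -/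
def kyFan (f g : ℝ → ℝ) : ℝ :=
  sInf {ε : ℝ | 0 ≤ ε ∧
    (volume.restrict (Ico (0:ℝ) 1)) {x | ε < |f x - g x|} ≤ ENNReal.ofReal ε}

/-- The pullback of the 1-Lipschitz functions on an mm-space by a parameter. -/
def pullLip (A : MMSpace) (φ : ℝ → A.X) : Set (ℝ → ℝ) :=
  {h | ∃ f : A.X → ℝ, LipschitzWith 1 f ∧ h = f ∘ φ}

/-- The Hausdorff distance between two sets of functions with respect to the Ky Fan metric. -/
def hausdorffKF (A B : Set (ℝ → ℝ)) : ℝ :=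
  max (⨆ f ∈ A, ⨅ g ∈ B, kyFan f g) (⨆ g ∈ B, ⨅ f ∈ A, kyFan f g)

/-- The observable distance between two mm-spaces. -/
def dconc (A B : MMSpace) : ℝ :=
  sInf {r : ℝ | ∃ φ ψ, IsParameter A φ ∧ IsParameter B ψ ∧
    r = hausdorffKF (pullLip A φ) (pullLip B ψ)}

end

noncomputable section

/-- The smooth approximation `F_a(x) = a⁻¹ log(e^{ax} + e^{-ax})` of `|x|`. -/
def Fa (a x : ℝ) : ℝ := a⁻¹ * Real.log (Real.exp (a * x) + Real.exp (-(a * x)))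

/-- A (minimizing, constant-speed) geodesic parametrized by `[0,1]`. -/
def IsGeodOn01 {X : Type*} [PseudoMetricSpace X] (γ : ℝ → X) : Prop :=
  ∀ s ∈ Set.Icc (0:ℝ) 1, ∀ s' ∈ Set.Icc (0:ℝ) 1,
    dist (γ s) (γ s') = |s - s'| * dist (γ 0) (γ 1)

end


open MeasureTheory Set in
private lemma jensen_rpow_aux {Y : Type*} [MeasurableSpace Y] (P : Measure Y)
    [IsProbabilityMeasure P] {f : Y → ℝ≥0∞} (hf : AEMeasurable f P) {e : ℝ} (he : 1 < e) :
    (∫⁻ x, f x ∂P) ^ e ≤ ∫⁻ x, f x ^ e ∂P := by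
  have hpq : e.HolderConjugate e.conjExponent := .conjExponent he
  have h := ENNReal.lintegral_mul_le_Lp_mul_Lq P hpq hf
    (aemeasurable_const (b := (1 : ℝ≥0∞)))
  simp only [Pi.mul_apply, mul_one, ENNReal.one_rpow, lintegral_one, measure_univ] at h
  have he0 : e ≠ 0 := by positivity
  calc (∫⁻ x, f x ∂P) ^ e ≤ ((∫⁻ x, f x ^ e ∂P) ^ (1 / e)) ^ e :=
        ENNReal.rpow_le_rpow h (by positivity)
    _ = ∫⁻ x, f x ^ e ∂P := by
        rw [← ENNReal.rpow_mul, one_div, inv_mul_cancel₀ he0, ENNReal.rpow_one]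

open MeasureTheory Set in
private lemma condProb_isProb {X : Type*} [MeasurableSpace X] (κ : Measure X)
    [IsFiniteMeasure κ] {B : Set X} (h0 : κ B ≠ 0) : IsProbabilityMeasure (condProb κ B) := by
  constructor
  simp only [condProb, Measure.smul_apply, Measure.restrict_apply_univ, smul_eq_mul]
  exact ENNReal.inv_mul_cancel h0 (measure_ne_top κ B)

open MeasureTheory Set in
/-- Discretization of a measure along a countable disjoint family: the
discretized measure `ν̄ = Σⱼ ν(Bⱼ)·μ_{Bⱼ}` admits a coupling with `ν` moving points at most
`2·sup diam Bⱼ`, and has smaller Rényi entropy. -/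
theorem discretization_coupling_and_entropy {X : Type*} [MetricSpace X] [CompleteSpace X]
    [TopologicalSpace.SeparableSpace X] [MeasurableSpace X] [BorelSpace X]
    (N' : ℝ) (hN' : N' < 0)
    (μ ν : Measure X) [IsProbabilityMeasure μ] [IsProbabilityMeasure ν]
    (hν2 : HasFiniteSecondMoment ν)
    {J : Type} [Countable J] (B : J → Set X)
    (hmeas : ∀ j, MeasurableSet (B j)) (hdisj : Pairwise (Function.onFun Disjoint B))
    (hcover : ν (⋃ j, B j)ᶜ = 0) (hpos : ∀ j, 0 < μ (B j)) :
    (∃ π : Measure (X × X),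
      IsCoupling π ν (Measure.sum fun j => ν (B j) • condProb μ (B j)) ∧
      ∀ᵐ p ∂π, edist p.1 p.2 ≤ 2 * ⨆ j, EMetric.diam (B j)) ∧
    renyiEntropy N' μ (Measure.sum fun j => ν (B j) • condProb μ (B j)) ≤
      renyiEntropy N' μ ν := by
  classical
  have hN'lt : 1 / N' < 0 := div_neg_of_pos_of_neg one_pos hN'
  have he1 : 1 < 1 - 1 / N' := by linarith
  set e : ℝ := 1 - 1 / N' with he_def
  have he0 : (0:ℝ) < e := by linarith
  have hμne : ∀ j, μ (B j) ≠ 0 := fun j => (hpos j).ne'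
  have hμnt : ∀ j, μ (B j) ≠ ∞ := fun j => measure_ne_top μ _
  haveI hP : ∀ j, IsProbabilityMeasure (condProb μ (B j)) := fun j => condProb_isProb μ (hμne j)
  constructor
  · -- the coupling
    refine ⟨Measure.sum fun j => ν (B j) • ((condProb ν (B j)).prod (condProb μ (B j))),
      ⟨?_, ?_⟩, ?_⟩
    · -- first marginal
      rw [Measure.map_sum measurable_fst.aemeasurable]
      have hterm : ∀ j, Measure.map Prod.fst
          (ν (B j) • ((condProb ν (B j)).prod (condProb μ (B j)))) = ν.restrict (B j) := by
        intro j
        by_cases hj : ν (B j) = 0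
        · simp [hj, Measure.restrict_eq_zero.mpr hj]
        · haveI : IsProbabilityMeasure (condProb ν (B j)) := condProb_isProb ν hj
          rw [Measure.map_smul, Measure.map_fst_prod, measure_univ, one_smul, condProb,
            smul_smul, ENNReal.mul_inv_cancel hj (measure_ne_top ν _), one_smul]
      rw [funext hterm, ← Measure.restrict_iUnion hdisj hmeas]
      exact Measure.restrict_eq_self_of_ae_mem (mem_ae_iff.mpr hcover)
    · -- second marginal
      rw [Measure.map_sum measurable_snd.aemeasurable]
      refine congrArg Measure.sum (funext fun j => ?_)
      by_cases hj : ν (B j) = 0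
      · simp [hj]
      · haveI : IsProbabilityMeasure (condProb ν (B j)) := condProb_isProb ν hj
        rw [Measure.map_smul, Measure.map_snd_prod, measure_univ, one_smul]
    · -- a.e. distance bound
      set D := ⨆ j, EMetric.diam (B j) with hD
      have hgm : Measurable fun p : X × X => edist p.1 p.2 := continuous_edist.measurable
      rw [ae_iff]
      simp only [not_le]
      have hTm : MeasurableSet {p : X × X | 2 * D < edist p.1 p.2} :=
        measurableSet_lt measurable_const hgm
      rw [Measure.sum_apply _ hTm]
      refine ENNReal.tsum_eq_zero.mpr fun j => ?_
      by_cases hj : ν (B j) = 0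
      · simp [hj]
      · haveI : IsProbabilityMeasure (condProb ν (B j)) := condProb_isProb ν hj
        rw [Measure.smul_apply, smul_eq_mul]
        refine mul_eq_zero.mpr (Or.inr ?_)
        have hsub : {p : X × X | 2 * D < edist p.1 p.2} ⊆
            ((B j)ᶜ ×ˢ univ) ∪ (univ ×ˢ (B j)ᶜ) := by
          intro p hp
          rcases Classical.em (p.1 ∈ B j) with h1 | h1
          · rcases Classical.em (p.2 ∈ B j) with h2 | h2
            · exfalso
              have hle : edist p.1 p.2 ≤ D :=
                le_trans (EMetric.edist_le_diam_of_mem h1 h2)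
                  (le_iSup (fun j => EMetric.diam (B j)) j)
              exact absurd (le_trans hle (le_mul_of_one_le_left zero_le one_le_two))
                (not_le.mpr hp)
            · exact Or.inr ⟨mem_univ _, h2⟩
          · exact Or.inl ⟨h1, mem_univ _⟩
        have h1 : condProb ν (B j) (B j)ᶜ = 0 := by
          simp [condProb, Measure.restrict_apply (hmeas j).compl, Set.compl_inter_self]
        have h2 : condProb μ (B j) (B j)ᶜ = 0 := by
          simp [condProb, Measure.restrict_apply (hmeas j).compl, Set.compl_inter_self]
        refine le_antisymm (le_trans (measure_mono hsub)
          (le_trans (measure_union_le _ _) ?_)) zero_le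
        rw [Measure.prod_prod, Measure.prod_prod, h1, h2]
        simp
  · -- the entropy inequality
    by_cases hac : ν ≪ μ
    swap
    · unfold renyiEntropy
      rw [if_neg hac]
      exact le_top
    set ρ : X → ℝ≥0∞ := ν.rnDeriv μ with hρ
    set ρbar : X → ℝ≥0∞ := fun x => ∑' j, (B j).indicator (fun _ => ν (B j) / μ (B j)) x
      with hρbar
    have hmeasρbar : Measurable ρbar :=
      Measurable.ennreal_tsum fun j => measurable_const.indicator (hmeas j)
    have hbar : (Measure.sum fun j => ν (B j) • condProb μ (B j)) = μ.withDensity ρbar := by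
      have hfun : ρbar = ∑' j, (B j).indicator (fun _ => ν (B j) / μ (B j)) := by
        funext x
        exact (ENNReal.tsum_apply).symm
      rw [hfun, withDensity_tsum (fun j => measurable_const.indicator (hmeas j))]
      refine congrArg Measure.sum (funext fun j => ?_)
      rw [withDensity_indicator (hmeas j), withDensity_const, condProb, smul_smul,
        div_eq_mul_inv]
    have hUm : MeasurableSet (⋃ j, B j) := MeasurableSet.iUnion hmeas
    unfold renyiEntropy
    rw [if_pos hac, if_pos (hbar ▸ withDensity_absolutelyContinuous μ ρbar)]
    have hrn : ∀ᵐ x ∂μ,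
        (Measure.sum fun j => ν (B j) • condProb μ (B j)).rnDeriv μ x = ρbar x := by
      rw [hbar]
      exact Measure.rnDeriv_withDensity μ hmeasρbar
    have hval : ∀ j, ∫⁻ x in B j, ρbar x ^ e ∂μ = (ν (B j) / μ (B j)) ^ e * μ (B j) := by
      intro j
      rw [setLIntegral_congr_fun (g := fun _ => (ν (B j) / μ (B j)) ^ e) (hmeas j)
        (fun x hx => ?_), setLIntegral_const]
      have hx' : ρbar x = ν (B j) / μ (B j) := by
        simp only [hρbar]
        rw [tsum_eq_single j (fun i hi =>
          indicator_of_notMem (fun hxi => (Set.disjoint_left.mp (hdisj hi) hxi) hx) _)]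
        exact indicator_of_mem hx _
      rw [hx']
    have hjen : ∀ j, (ν (B j) / μ (B j)) ^ e * μ (B j) ≤ ∫⁻ x in B j, ρ x ^ e ∂μ := by
      intro j
      have hρm : AEMeasurable ρ (condProb μ (B j)) :=
        (Measure.measurable_rnDeriv ν μ).aemeasurable
      have h1 : ∫⁻ x, ρ x ∂(condProb μ (B j)) = (μ (B j))⁻¹ * ν (B j) := by
        rw [condProb, lintegral_smul_measure, Measure.setLIntegral_rnDeriv' hac (hmeas j), smul_eq_mul]
      have h2 : ∫⁻ x, ρ x ^ e ∂(condProb μ (B j)) = (μ (B j))⁻¹ * ∫⁻ x in B j, ρ x ^ e ∂μ := by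
        rw [condProb, lintegral_smul_measure, smul_eq_mul]
      have hj := jensen_rpow_aux (condProb μ (B j)) hρm he1
      rw [h1, h2] at hj
      have hdiv : ν (B j) / μ (B j) = (μ (B j))⁻¹ * ν (B j) := by
        rw [div_eq_mul_inv, mul_comm]
      calc (ν (B j) / μ (B j)) ^ e * μ (B j)
          ≤ ((μ (B j))⁻¹ * ∫⁻ x in B j, ρ x ^ e ∂μ) * μ (B j) := by
            rw [hdiv]; exact mul_le_mul_left hj _
        _ = ∫⁻ x in B j, ρ x ^ e ∂μ := by
            rw [mul_comm ((μ (B j))⁻¹) _, mul_assoc,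
              ENNReal.inv_mul_cancel (hμne j) (hμnt j), mul_one]
    calc ∫⁻ x, (Measure.sum fun j => ν (B j) • condProb μ (B j)).rnDeriv μ x ^ e ∂μ
        = ∫⁻ x, ρbar x ^ e ∂μ :=
          lintegral_congr_ae (hrn.mono fun x hx => by simp only [hx])
      _ = ∫⁻ x in ⋃ j, B j, ρbar x ^ e ∂μ + ∫⁻ x in (⋃ j, B j)ᶜ, ρbar x ^ e ∂μ :=
          (lintegral_add_compl _ hUm).symm
      _ = ∫⁻ x in ⋃ j, B j, ρbar x ^ e ∂μ := by
          rw [setLIntegral_congr_fun (g := fun _ => (0:ℝ≥0∞)) hUm.compl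
            (fun x hx => ?_), lintegral_zero, add_zero]
          have hx0 : ρbar x = 0 := ENNReal.tsum_eq_zero.mpr fun j =>
            indicator_of_notMem (fun hmem => hx (mem_iUnion.mpr ⟨j, hmem⟩)) _
          rw [hx0, ENNReal.zero_rpow_of_pos he0]
      _ = ∑' j, ∫⁻ x in B j, ρbar x ^ e ∂μ := lintegral_iUnion hmeas hdisj _
      _ = ∑' j, (ν (B j) / μ (B j)) ^ e * μ (B j) := by simp_rw [hval]
      _ ≤ ∑' j, ∫⁻ x in B j, ρ x ^ e ∂μ := ENNReal.tsum_le_tsum hjen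
      _ = ∫⁻ x in ⋃ j, B j, ρ x ^ e ∂μ := (lintegral_iUnion hmeas hdisj _).symm
      _ ≤ ∫⁻ x, ρ x ^ e ∂μ := setLIntegral_le_lintegral _ _
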